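/- For every t ∈ (0,1] and every compact convex body V ⊆ ℝⁿ (compact convex with 0 in the interior), the image Ψ_t(V) of V under Ψ_t(x) = x/(1 + t‖x‖) is strictly convex, i.e., every boundary point of Ψ_t(V) is an extreme point of Ψ_t(V). -/

import Mathlib

open Set Metric

/-- The radial map `Ψ_t(x) = x/(1+t‖x‖)` maps a compact convex body with `0` in its
interior to a strictly convex body: every boundary point of the image is extreme. -/
theorem psi_image_strictly_convex (n : ℕ) (t : ℝ) (ht : t ∈ Set.Ioc (0:ℝ) 1)
    (Ψ : EuclideanSpace ℝ (Fin n) → EuclideanSpace ℝ (Fin n))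
    (hΨ : ∀ x, Ψ x = (1 + t * ‖x‖)⁻¹ • x)
    (V : Set (EuclideanSpace ℝ (Fin n)))
    (hVc : IsCompact V) (hVconv : Convex ℝ V)
    (h0 : (0:EuclideanSpace ℝ (Fin n)) ∈ interior V) :
    ∀ x ∈ frontier (Ψ '' V), x ∈ Set.extremePoints ℝ (Ψ '' V) := by
  obtain ⟨ht0, ht1⟩ := ht
  have hVnhds : V ∈ nhds (0 : EuclideanSpace ℝ (Fin n)) := mem_interior_iff_mem_nhds.mp h0
  have hV0 : (0:EuclideanSpace ℝ (Fin n)) ∈ V := interior_subset h0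
  have hVa : Absorbent ℝ V := absorbent_nhds_zero hVnhds
  have hVb : Bornology.IsVonNBounded ℝ V :=
    NormedSpace.isVonNBounded_of_isBounded _ hVc.isBounded
  have hmem : ∀ x : EuclideanSpace ℝ (Fin n), x ∈ V ↔ gauge V x ≤ 1 := by
    intro x
    rw [gauge_le_one_iff_mem_closure hVconv hVnhds, hVc.isClosed.closure_eq]
  -- positivity of the denominator
  have hden : ∀ x : EuclideanSpace ℝ (Fin n), (0:ℝ) < 1 + t * ‖x‖ := fun x => by positivity
  -- the image is a sublevel set of `h y = gauge V y + t‖y‖`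
  have himg : Ψ '' V = {y : EuclideanSpace ℝ (Fin n) | gauge V y + t * ‖y‖ ≤ 1} := by
    ext y
    constructor
    · rintro ⟨x, hx, rfl⟩
      rw [hΨ]
      set s : ℝ := (1 + t * ‖x‖)⁻¹ with hs
      have hs0 : 0 < s := inv_pos.mpr (hden x)
      have h1 : gauge V (s • x) = s * gauge V x := by
        rw [gauge_smul_of_nonneg hs0.le, smul_eq_mul]
      have h2 : ‖s • x‖ = s * ‖x‖ := by
        rw [norm_smul, Real.norm_eq_abs, abs_of_pos hs0]
      rw [mem_setOf_eq, h1, h2]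
      have hgx : gauge V x ≤ 1 := (hmem x).1 hx
      calc s * gauge V x + t * (s * ‖x‖) = s * (gauge V x + t * ‖x‖) := by ring
        _ ≤ s * (1 + t * ‖x‖) := by
            apply mul_le_mul_of_nonneg_left _ hs0.le
            linarith
        _ = 1 := inv_mul_cancel₀ (hden x).ne'
    · intro hy
      simp only [mem_setOf_eq] at hy
      rcases eq_or_ne y 0 with rfl | hy0
      · exact ⟨0, hV0, by rw [hΨ]; simp⟩
      · have hg0 : 0 < gauge V y := (gauge_pos hVa hVb).mpr hy0
        have hty : t * ‖y‖ < 1 := by linarith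
        set c : ℝ := (1 - t * ‖y‖)⁻¹ with hc
        have hc0 : 0 < c := inv_pos.mpr (by linarith)
        refine ⟨c • y, ?_, ?_⟩
        · rw [hmem, gauge_smul_of_nonneg hc0.le, smul_eq_mul]
          rw [hc, inv_mul_le_iff₀ (by linarith)]
          linarith
        · rw [hΨ, norm_smul, Real.norm_eq_abs, abs_of_pos hc0]
          have hne : (1:ℝ) - t * ‖y‖ ≠ 0 := by linarith
          have : 1 + t * (c * ‖y‖) = c := by
            rw [hc]
            field_simp
            ring
          rw [this, smul_smul, inv_mul_cancel₀ hc0.ne', one_smul]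
  -- `gauge V` is continuous, hence so is `h`
  have hgcont : Continuous (gauge V) := continuous_gauge hVconv hVnhds
  have hhcont : Continuous (fun y : EuclideanSpace ℝ (Fin n) => gauge V y + t * ‖y‖) :=
    hgcont.add (continuous_const.mul continuous_norm)
  have hWclosed : IsClosed (Ψ '' V) := by
    rw [himg]; exact isClosed_le hhcont continuous_const
  intro x hx
  have hxW : x ∈ Ψ '' V := hWclosed.frontier_subset hx
  have hxle : gauge V x + t * ‖x‖ ≤ 1 := by rw [himg] at hxW; exact hxW
  have hx1 : gauge V x + t * ‖x‖ = 1 := by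
    rcases hxle.lt_or_eq with hlt | heq
    · exfalso
      have hopen : IsOpen {y : EuclideanSpace ℝ (Fin n) | gauge V y + t * ‖y‖ < 1} :=
        isOpen_lt hhcont continuous_const
      have hsub : {y : EuclideanSpace ℝ (Fin n) | gauge V y + t * ‖y‖ < 1} ⊆ Ψ '' V := by
        rw [himg]; exact fun y hy => le_of_lt (α := ℝ) hy
      exact hx.2 (interior_maximal hsub hopen hlt)
    · exact heq
  refine ⟨hxW, ?_⟩
  rintro x₁ hx₁ x₂ hx₂ ⟨a, b, ha, hb, hab, hxs⟩
  rw [himg, mem_setOf_eq] at hx₁ hx₂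
  -- abbreviations
  have hgadd : gauge V (a • x₁ + b • x₂) ≤ a * gauge V x₁ + b * gauge V x₂ := by
    calc gauge V (a • x₁ + b • x₂) ≤ gauge V (a • x₁) + gauge V (b • x₂) :=
          gauge_add_le hVconv hVa _ _
      _ = a * gauge V x₁ + b * gauge V x₂ := by
          rw [gauge_smul_of_nonneg ha.le, gauge_smul_of_nonneg hb.le, smul_eq_mul, smul_eq_mul]
  have hnadd : ‖a • x₁ + b • x₂‖ ≤ a * ‖x₁‖ + b * ‖x₂‖ := by
    calc ‖a • x₁ + b • x₂‖ ≤ ‖a • x₁‖ + ‖b • x₂‖ := norm_add_le _ _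
      _ = a * ‖x₁‖ + b * ‖x₂‖ := by
          rw [norm_smul, norm_smul, Real.norm_eq_abs, Real.norm_eq_abs,
            abs_of_pos ha, abs_of_pos hb]
  rw [← hxs] at hx1
  -- forcing equalities
  have hsum : a * (gauge V x₁ + t * ‖x₁‖) + b * (gauge V x₂ + t * ‖x₂‖) ≤ 1 := by
    nlinarith
  have hh1 : gauge V x₁ + t * ‖x₁‖ = 1 := by nlinarith
  have hh2 : gauge V x₂ + t * ‖x₂‖ = 1 := by nlinarith
  have hneq : ‖a • x₁ + b • x₂‖ = a * ‖x₁‖ + b * ‖x₂‖ := by nlinarith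
  have hx10 : x₁ ≠ 0 := by
    rintro rfl; simp [gauge_zero] at hh1
  have hx20 : x₂ ≠ 0 := by
    rintro rfl; simp [gauge_zero] at hh2
  -- same ray
  have hsr : SameRay ℝ (a • x₁) (b • x₂) := by
    rw [sameRay_iff_norm_add, hneq, norm_smul, norm_smul, Real.norm_eq_abs,
      Real.norm_eq_abs, abs_of_pos ha, abs_of_pos hb]
  have h1 : SameRay ℝ x₁ (b • x₂) :=
    (SameRay.sameRay_pos_smul_right x₁ ha).trans hsr
      (fun h => absurd h (smul_ne_zero ha.ne' hx10))
  have hray : SameRay ℝ x₁ x₂ :=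
    h1.trans (SameRay.sameRay_pos_smul_left x₂ hb)
      (fun h => absurd h (smul_ne_zero hb.ne' hx20))
  have hnorm_eq : ‖x₁‖ = ‖x₂‖ := by
    have hsm := sameRay_iff_norm_smul_eq.mp hray
    have hn1 : (0:ℝ) < ‖x₁‖ := norm_pos_iff.mpr hx10
    set r : ℝ := ‖x₂‖ / ‖x₁‖ with hr
    have hr0 : (0:ℝ) ≤ r := by positivity
    have hx2eq : x₂ = r • x₁ := by
      rw [hr, div_eq_inv_mul, mul_smul, ← hsm, smul_smul, inv_mul_cancel₀ hn1.ne', one_smul]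
    have hg2 : gauge V x₂ = r * gauge V x₁ := by
      rw [hx2eq, gauge_smul_of_nonneg hr0, smul_eq_mul]
    have hn2 : ‖x₂‖ = r * ‖x₁‖ := by
      rw [hx2eq, norm_smul, Real.norm_eq_abs, abs_of_nonneg hr0]
    have h1r : r = 1 := by
      have hkey : r * (gauge V x₁ + t * ‖x₁‖) = 1 := by
        rw [← hh2, hg2, hn2]; ring
      rw [hh1, mul_one] at hkey; exact hkey
    rw [hn2, h1r, one_mul]
  have hx12 : x₁ = x₂ := (sameRay_iff_of_norm_eq hnorm_eq).mp hray
  subst hx12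
  have hx1x : x₁ = x := by
    rw [← hxs, ← add_smul, hab, one_smul]
  exact hx1x
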